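/- In a discrete inverse category, restriction idempotents are phases of the chosen Frobenius structures: for every morphism f : X → Y, writing e := f̄ : X → X for its restriction idempotent, one has e;Δ_X = Δ_X;(e ⊗ id_X) = Δ_X;(id_X ⊗ e) and (e ⊗ id_X);∇_X = (id_X ⊗ e);∇_X = ∇_X;e, where ∇_X := (Δ_X)°. -/

import Mathlib

open CategoryTheory MonoidalCategory

universe v u

/-- A restriction category: a category equipped with a restriction operator
sending `f : A ⟶ B` to `f̄ : A ⟶ A`, satisfying (R1)–(R4).
Composition `f ≫ g` is diagrammatic (`f` then `g`). -/
class RestrictionCategory (C : Type u) [Category.{v} C] where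
  rst : ∀ {A B : C}, (A ⟶ B) → (A ⟶ A)
  rst_comp : ∀ {A B : C} (f : A ⟶ B), rst f ≫ f = f
  rst_comm : ∀ {A B B' : C} (f : A ⟶ B) (g : A ⟶ B'), rst f ≫ rst g = rst g ≫ rst f
  rst_rst : ∀ {A B B' : C} (f : A ⟶ B) (g : A ⟶ B'), rst (rst f ≫ g) = rst f ≫ rst g
  comp_rst : ∀ {A B B' : C} (f : A ⟶ B) (g : B ⟶ B'), f ≫ rst g = rst (f ≫ g) ≫ f

/-- An inverse category: a restriction category in which every morphism is a
partial isomorphism; `pinv f` is the partial inverse `f°`. -/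
class InverseCategory (C : Type u) [Category.{v} C] extends RestrictionCategory C where
  pinv : ∀ {A B : C}, (A ⟶ B) → (B ⟶ A)
  comp_pinv : ∀ {A B : C} (f : A ⟶ B), f ≫ pinv f = rst f
  pinv_comp : ∀ {A B : C} (f : A ⟶ B), pinv f ≫ f = rst (pinv f)

open RestrictionCategory InverseCategory

/-- The "middle-four" interchange map `(A⊗B)⊗(A'⊗B') ⟶ (A⊗A')⊗(B⊗B')`
(i.e. `id ⊗ σ ⊗ id` with coherence made explicit). -/
def midSwap (C : Type u) [Category.{v} C] [MonoidalCategory C] [SymmetricCategory C]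
    (A B A' B' : C) : (A ⊗ B) ⊗ (A' ⊗ B') ⟶ (A ⊗ A') ⊗ (B ⊗ B') :=
  (α_ A B (A' ⊗ B')).hom ≫
    (𝟙 A ⊗ₘ ((α_ B A' B').inv ≫ ((β_ B A').hom ⊗ₘ 𝟙 B') ≫ (α_ A' B B').hom)) ≫
      (α_ A A' (B ⊗ B')).inv

/-- A discrete inverse category: a symmetric monoidal inverse category whose
tensor preserves restriction in each argument, equipped with a chosen
coassociative, cocommutative, natural comultiplication `Δ_X : X ⟶ X ⊗ X`
whose partial inverse `∇_X := (Δ_X)°` satisfies the (semi-)Frobenius and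
specialness laws, compatibly with the tensor. -/
class DiscreteInverseCategory (C : Type u) [Category.{v} C] [MonoidalCategory C]
    [SymmetricCategory C] extends InverseCategory C where
  rst_tensor : ∀ {A B A' B' : C} (f : A ⟶ B) (g : A' ⟶ B'), rst (f ⊗ₘ g) = rst f ⊗ₘ rst g
  Δ : ∀ X : C, X ⟶ X ⊗ X
  Δ_coassoc : ∀ X : C, Δ X ≫ (Δ X ⊗ₘ 𝟙 X) ≫ (α_ X X X).hom = Δ X ≫ (𝟙 X ⊗ₘ Δ X)
  Δ_cocomm : ∀ X : C, Δ X ≫ (β_ X X).hom = Δ X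
  Δ_natural : ∀ {X Y : C} (f : X ⟶ Y), f ≫ Δ Y = Δ X ≫ (f ⊗ₘ f)
  frobenius : ∀ X : C,
    pinv (Δ X) ≫ Δ X = (𝟙 X ⊗ₘ Δ X) ≫ (α_ X X X).inv ≫ (pinv (Δ X) ⊗ₘ 𝟙 X)
  frobenius' : ∀ X : C,
    pinv (Δ X) ≫ Δ X = (Δ X ⊗ₘ 𝟙 X) ≫ (α_ X X X).hom ≫ (𝟙 X ⊗ₘ pinv (Δ X))
  special : ∀ X : C, Δ X ≫ pinv (Δ X) = 𝟙 X
  Δ_tensor : ∀ X Y : C, Δ (X ⊗ Y) = (Δ X ⊗ₘ Δ Y) ≫ midSwap C X X Y Y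
  Δ_unit : Δ (𝟙_ C) = (λ_ (𝟙_ C)).inv

open DiscreteInverseCategory

section Toolbox

variable {C : Type u} [Category.{v} C]

section Restriction
variable [RestrictionCategory C]

lemma rst_id' (A : C) : rst (𝟙 A) = 𝟙 A := by
  have h := rst_comp (𝟙 A)
  simpa using h

lemma rst_rst_self' {A B : C} (f : A ⟶ B) : rst (rst f) = rst f := by
  have h := rst_rst f (𝟙 A)
  simpa [rst_id'] using h

lemma rst_idem' {A B : C} (f : A ⟶ B) : rst f ≫ rst f = rst f := by
  have h := rst_rst f f
  rw [rst_comp] at h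
  exact h.symm

lemma rst_comp_rst' {A B B' : C} (f : A ⟶ B) (g : B ⟶ B') :
    rst f ≫ rst (f ≫ g) = rst (f ≫ g) := by
  have h := rst_rst f (f ≫ g)
  rw [← Category.assoc, rst_comp] at h
  exact h.symm

lemma rst_rst_comp' {A B B' : C} (f : A ⟶ B) (g : B ⟶ B') :
    rst (f ≫ g) ≫ rst f = rst (f ≫ g) := by
  rw [rst_comm]
  exact rst_comp_rst' f g

end Restriction

section Inverse
variable [InverseCategory C]

lemma pinv_unique' {A B : C} (f : A ⟶ B) (g : B ⟶ A)
    (h1 : f ≫ g = rst f) (h2 : g ≫ f = rst g) : g = pinv f := by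
  have hg : g = rst g ≫ pinv f := by
    calc g = rst g ≫ g := (rst_comp g).symm
    _ = (g ≫ f) ≫ g := by rw [h2]
    _ = g ≫ (f ≫ g) := by simp only [Category.assoc]
    _ = g ≫ rst f := by rw [h1]
    _ = g ≫ (f ≫ pinv f) := by rw [comp_pinv]
    _ = (g ≫ f) ≫ pinv f := by simp only [Category.assoc]
    _ = rst g ≫ pinv f := by rw [h2]
  have hp : pinv f = rst (pinv f) ≫ g := by
    calc pinv f = rst (pinv f) ≫ pinv f := (rst_comp _).symm
    _ = (pinv f ≫ f) ≫ pinv f := by rw [pinv_comp]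
    _ = pinv f ≫ (f ≫ pinv f) := by simp only [Category.assoc]
    _ = pinv f ≫ rst f := by rw [comp_pinv]
    _ = pinv f ≫ (f ≫ g) := by rw [h1]
    _ = (pinv f ≫ f) ≫ g := by simp only [Category.assoc]
    _ = rst (pinv f) ≫ g := by rw [pinv_comp]
  have hrg : rst g = rst g ≫ rst (pinv f) := by
    conv_lhs => rw [hg, rst_rst]
  have hrp : rst (pinv f) = rst g := by
    have h3 : rst (pinv f) = rst (pinv f) ≫ rst g := by
      conv_lhs => rw [hp, rst_rst]
    rw [h3, rst_comm, ← hrg]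
  calc g = rst g ≫ pinv f := hg
  _ = rst (pinv f) ≫ pinv f := by rw [hrp]
  _ = pinv f := rst_comp _

lemma pinv_rst' {A B : C} (f : A ⟶ B) : pinv (rst f) = rst f := by
  refine (pinv_unique' (rst f) (rst f) ?_ ?_).symm <;>
    rw [rst_idem', rst_rst_self']

lemma pinv_comp_comp' {A B B' : C} (f : A ⟶ B) (g : B ⟶ B') :
    pinv (f ≫ g) = pinv g ≫ pinv f := by
  refine (pinv_unique' _ _ ?_ ?_).symm
  · calc (f ≫ g) ≫ pinv g ≫ pinv f = f ≫ (g ≫ pinv g) ≫ pinv f := by simp only [Category.assoc]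
    _ = f ≫ rst g ≫ pinv f := by rw [comp_pinv]
    _ = (f ≫ rst g) ≫ pinv f := by simp only [Category.assoc]
    _ = (rst (f ≫ g) ≫ f) ≫ pinv f := by rw [comp_rst]
    _ = rst (f ≫ g) ≫ rst f := by rw [Category.assoc, comp_pinv]
    _ = rst (f ≫ g) := rst_rst_comp' f g
  · calc (pinv g ≫ pinv f) ≫ (f ≫ g) = pinv g ≫ (pinv f ≫ f) ≫ g := by simp only [Category.assoc]
    _ = pinv g ≫ rst (pinv f) ≫ g := by rw [pinv_comp]
    _ = (pinv g ≫ rst (pinv f)) ≫ g := by simp only [Category.assoc]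
    _ = (rst (pinv g ≫ pinv f) ≫ pinv g) ≫ g := by rw [comp_rst]
    _ = rst (pinv g ≫ pinv f) ≫ rst (pinv g) := by rw [Category.assoc, pinv_comp]
    _ = rst (pinv g ≫ pinv f) := rst_rst_comp' _ _

end Inverse

section Discrete
variable [MonoidalCategory C] [SymmetricCategory C] [DiscreteInverseCategory C]

lemma pinv_tensor' {A B A' B' : C} (f : A ⟶ B) (g : A' ⟶ B') :
    pinv (f ⊗ₘ g) = pinv f ⊗ₘ pinv g := by
  refine (pinv_unique' _ _ ?_ ?_).symm
  · rw [tensorHom_comp_tensorHom, comp_pinv, comp_pinv, ← rst_tensor]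
  · rw [tensorHom_comp_tensorHom, pinv_comp, pinv_comp, ← rst_tensor]

end Discrete

end Toolbox


set_option maxHeartbeats 2000000 in
/-- in a discrete inverse category, restriction idempotents
are phases of the chosen Frobenius structures: for `f : X ⟶ Y` and `e := f̄`,
`e;Δ_X = Δ_X;(e ⊗ₘ id_X) = Δ_X;(id_X ⊗ₘ e)` and
`(e ⊗ₘ id_X);∇_X = (id_X ⊗ₘ e);∇_X = ∇_X;e`. -/
theorem restriction_idempotents_are_phases {C : Type u} [Category.{v} C] [MonoidalCategory C]
    [SymmetricCategory C] [DiscreteInverseCategory C] {X Y : C} (f : X ⟶ Y) :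
    rst f ≫ Δ X = Δ X ≫ (rst f ⊗ₘ 𝟙 X) ∧
    Δ X ≫ (rst f ⊗ₘ 𝟙 X) = Δ X ≫ (𝟙 X ⊗ₘ rst f) ∧
    (rst f ⊗ₘ 𝟙 X) ≫ pinv (Δ X) = (𝟙 X ⊗ₘ rst f) ≫ pinv (Δ X) ∧
    (𝟙 X ⊗ₘ rst f) ≫ pinv (Δ X) = pinv (Δ X) ≫ rst f := by
  set e := rst f with he
  set D := Δ X with hDdef
  set N := pinv (Δ X) with hNdef
  -- basic restriction idempotent facts
  have hee : e ≫ e = e := rst_idem' f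
  -- tensor restriction idempotents
  have he1 : rst (f ⊗ₘ 𝟙 X) = e ⊗ₘ 𝟙 X := by rw [rst_tensor, rst_id', he]
  have h1e : rst (𝟙 X ⊗ₘ f) = 𝟙 X ⊗ₘ e := by rw [rst_tensor, rst_id', he]
  have heet : rst (f ⊗ₘ f) = e ⊗ₘ e := by rw [rst_tensor, he]
  -- W := N ≫ D is the restriction idempotent rst N
  have hW : N ≫ D = rst N := pinv_comp (Δ X)
  have hDN : D ≫ N = 𝟙 X := special X
  have hDW : D ≫ (N ≫ D) = D := by rw [← Category.assoc, hDN, Category.id_comp]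
  have hWN : (N ≫ D) ≫ N = N := by rw [Category.assoc, hDN, Category.comp_id]
  have hWβ : (N ≫ D) ≫ (β_ X X).hom = N ≫ D := by
    rw [Category.assoc, hDdef, Δ_cocomm]
  -- commuting restriction idempotents
  have c1 : (e ⊗ₘ 𝟙 X) ≫ (N ≫ D) = (N ≫ D) ≫ (e ⊗ₘ 𝟙 X) := by
    rw [hW, ← he1]; exact rst_comm (f ⊗ₘ 𝟙 X) N
  have c2 : (𝟙 X ⊗ₘ e) ≫ (N ≫ D) = (N ≫ D) ≫ (𝟙 X ⊗ₘ e) := by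
    rw [hW, ← h1e]; exact rst_comm (𝟙 X ⊗ₘ f) N
  have c3 : (e ⊗ₘ e) ≫ (N ≫ D) = (N ≫ D) ≫ (e ⊗ₘ e) := by
    rw [hW, ← heet]; exact rst_comm (f ⊗ₘ f) N
  -- braiding naturality
  have hβnat : (e ⊗ₘ 𝟙 X) ≫ (β_ X X).hom = (β_ X X).hom ≫ (𝟙 X ⊗ₘ e) :=
    BraidedCategory.braiding_naturality e (𝟙 X)
  -- the key symmetry: W ≫ (e ⊗ₘ 1) = W ≫ (1 ⊗ₘ e)
  have hS : (N ≫ D) ≫ (e ⊗ₘ 𝟙 X) = (N ≫ D) ≫ (𝟙 X ⊗ₘ e) := by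
    calc (N ≫ D) ≫ (e ⊗ₘ 𝟙 X) = (e ⊗ₘ 𝟙 X) ≫ (N ≫ D) := c1.symm
    _ = (e ⊗ₘ 𝟙 X) ≫ ((N ≫ D) ≫ (β_ X X).hom) := by rw [hWβ]
    _ = ((e ⊗ₘ 𝟙 X) ≫ (N ≫ D)) ≫ (β_ X X).hom := by simp only [Category.assoc]
    _ = ((N ≫ D) ≫ (e ⊗ₘ 𝟙 X)) ≫ (β_ X X).hom := by rw [c1]
    _ = (N ≫ D) ≫ ((e ⊗ₘ 𝟙 X) ≫ (β_ X X).hom) := by simp only [Category.assoc]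
    _ = (N ≫ D) ≫ ((β_ X X).hom ≫ (𝟙 X ⊗ₘ e)) := by rw [hβnat]
    _ = ((N ≫ D) ≫ (β_ X X).hom) ≫ (𝟙 X ⊗ₘ e) := by simp only [Category.assoc]
    _ = (N ≫ D) ≫ (𝟙 X ⊗ₘ e) := by rw [hWβ]
  -- decompose e ⊗ₘ e
  have hsplit : (e ⊗ₘ e) = (e ⊗ₘ 𝟙 X) ≫ (𝟙 X ⊗ₘ e) := by
    rw [tensorHom_comp_tensorHom, Category.comp_id, Category.id_comp]
  -- crux: W ≫ (e ⊗ₘ e) = W ≫ (e ⊗ₘ 1) = W ≫ (1 ⊗ₘ e)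
  have hcrux : (N ≫ D) ≫ (e ⊗ₘ e) = (N ≫ D) ≫ (e ⊗ₘ 𝟙 X) := by
    calc (N ≫ D) ≫ (e ⊗ₘ e) = (N ≫ D) ≫ ((e ⊗ₘ 𝟙 X) ≫ (𝟙 X ⊗ₘ e)) := by rw [hsplit]
    _ = ((N ≫ D) ≫ (e ⊗ₘ 𝟙 X)) ≫ (𝟙 X ⊗ₘ e) := by simp only [Category.assoc]
    _ = ((N ≫ D) ≫ (𝟙 X ⊗ₘ e)) ≫ (𝟙 X ⊗ₘ e) := by rw [hS]
    _ = (N ≫ D) ≫ ((𝟙 X ⊗ₘ e) ≫ (𝟙 X ⊗ₘ e)) := by simp only [Category.assoc]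
    _ = (N ≫ D) ≫ (𝟙 X ⊗ₘ e) := by
        rw [tensorHom_comp_tensorHom, Category.comp_id, hee]
    _ = (N ≫ D) ≫ (e ⊗ₘ 𝟙 X) := hS.symm
  have hcrux' : (N ≫ D) ≫ (e ⊗ₘ e) = (N ≫ D) ≫ (𝟙 X ⊗ₘ e) := by rw [hcrux, hS]
  -- naturality at e, and its partial inverse (conaturality)
  have hnat : e ≫ D = D ≫ (e ⊗ₘ e) := by rw [hDdef, he, Δ_natural]
  have hconat : N ≫ e = (e ⊗ₘ e) ≫ N := by
    have h := congrArg pinv hnat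
    rw [pinv_comp_comp', pinv_comp_comp', pinv_tensor', he, pinv_rst', ← he] at h
    exact h
  refine ⟨?_, ?_, ?_, ?_⟩
  · -- e ≫ Δ = Δ ≫ (e ⊗ₘ 1)
    calc e ≫ D = D ≫ (e ⊗ₘ e) := hnat
    _ = (D ≫ (N ≫ D)) ≫ (e ⊗ₘ e) := by rw [hDW]
    _ = D ≫ ((N ≫ D) ≫ (e ⊗ₘ e)) := by simp only [Category.assoc]
    _ = D ≫ ((N ≫ D) ≫ (e ⊗ₘ 𝟙 X)) := by rw [hcrux]
    _ = (D ≫ (N ≫ D)) ≫ (e ⊗ₘ 𝟙 X) := by simp only [Category.assoc]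
    _ = D ≫ (e ⊗ₘ 𝟙 X) := by rw [hDW]
  · -- Δ ≫ (e ⊗ₘ 1) = Δ ≫ (1 ⊗ₘ e)
    calc D ≫ (e ⊗ₘ 𝟙 X) = (D ≫ (N ≫ D)) ≫ (e ⊗ₘ 𝟙 X) := by rw [hDW]
    _ = D ≫ ((N ≫ D) ≫ (e ⊗ₘ 𝟙 X)) := by simp only [Category.assoc]
    _ = D ≫ ((N ≫ D) ≫ (𝟙 X ⊗ₘ e)) := by rw [hS]
    _ = (D ≫ (N ≫ D)) ≫ (𝟙 X ⊗ₘ e) := by simp only [Category.assoc]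
    _ = D ≫ (𝟙 X ⊗ₘ e) := by rw [hDW]
  · -- (e ⊗ₘ 1) ≫ ∇ = (1 ⊗ₘ e) ≫ ∇
    calc (e ⊗ₘ 𝟙 X) ≫ N = (e ⊗ₘ 𝟙 X) ≫ ((N ≫ D) ≫ N) := by rw [hWN]
    _ = ((e ⊗ₘ 𝟙 X) ≫ (N ≫ D)) ≫ N := by simp only [Category.assoc]
    _ = ((N ≫ D) ≫ (e ⊗ₘ 𝟙 X)) ≫ N := by rw [c1]
    _ = ((N ≫ D) ≫ (𝟙 X ⊗ₘ e)) ≫ N := by rw [hS]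
    _ = ((𝟙 X ⊗ₘ e) ≫ (N ≫ D)) ≫ N := by rw [c2]
    _ = (𝟙 X ⊗ₘ e) ≫ ((N ≫ D) ≫ N) := by simp only [Category.assoc]
    _ = (𝟙 X ⊗ₘ e) ≫ N := by rw [hWN]
  · -- (1 ⊗ₘ e) ≫ ∇ = ∇ ≫ e
    calc (𝟙 X ⊗ₘ e) ≫ N = (𝟙 X ⊗ₘ e) ≫ ((N ≫ D) ≫ N) := by rw [hWN]
    _ = ((𝟙 X ⊗ₘ e) ≫ (N ≫ D)) ≫ N := by simp only [Category.assoc]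
    _ = ((N ≫ D) ≫ (𝟙 X ⊗ₘ e)) ≫ N := by rw [c2]
    _ = ((N ≫ D) ≫ (e ⊗ₘ e)) ≫ N := by rw [hcrux']
    _ = ((e ⊗ₘ e) ≫ (N ≫ D)) ≫ N := by rw [c3]
    _ = (e ⊗ₘ e) ≫ ((N ≫ D) ≫ N) := by simp only [Category.assoc]
    _ = (e ⊗ₘ e) ≫ N := by rw [hWN]
    _ = N ≫ e := hconat.symm
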